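/- Let A ∈ SL₂$ be a Clifford matrix. (i) If A is a parabolic translation and Aκ = κx for some quaternionic spinor κ and some x ∈ ℍ, then x = 1. (ii) A is a parabolic translation if and only if A ≠ 1 and there exists a quaternionic spinor κ with Aκ = κ. -/

import Mathlib

open Quaternion

noncomputable section

/-- The involution `q* = a + bi + cj - dk` on quaternions (Clifford reversion). -/
def qstar (q : ℍ[ℝ]) : ℍ[ℝ] := ⟨q.re, q.imI, q.imJ, -q.imK⟩

/-- The involution `q' = a - bi - cj + dk` on quaternions. -/
def qprime (q : ℍ[ℝ]) : ℍ[ℝ] := ⟨q.re, -q.imI, -q.imJ, q.imK⟩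

/-- A paravector is an element of `ℝ + ℝi + ℝj`, i.e. a quaternion with zero `k`-component. -/
def IsParavector (q : ℍ[ℝ]) : Prop := q.imK = 0

/-- The quaternion `k`. -/
def qk : ℍ[ℝ] := ⟨0, 0, 0, 1⟩

/-- A quaternionic spinor: a pair `(ξ, η) ≠ (0,0)` with `ξ * conj η` a paravector. -/
def IsSpinor (κ : ℍ[ℝ] × ℍ[ℝ]) : Prop := κ ≠ 0 ∧ IsParavector (κ.1 * star κ.2)

/-- The bracket `{κ₁, κ₂} = ξ₁* η₂ − η₁* ξ₂`. -/
def bracket (κ₁ κ₂ : ℍ[ℝ] × ℍ[ℝ]) : ℍ[ℝ] := qstar κ₁.1 * κ₂.2 - qstar κ₁.2 * κ₂.1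

/-- Right multiplication `κ x = (ξ x, η x)`. -/
def rmul (κ : ℍ[ℝ] × ℍ[ℝ]) (x : ℍ[ℝ]) : ℍ[ℝ] × ℍ[ℝ] := (κ.1 * x, κ.2 * x)

/-- The complementary pair `κ̌ = (η', −ξ')`. -/
def qcheck (κ : ℍ[ℝ] × ℍ[ℝ]) : ℍ[ℝ] × ℍ[ℝ] := (qprime κ.2, -qprime κ.1)

/-- The real inner product on `ℍ²`: `⟨κ₁, κ₂⟩ = Re (ξ₁ ξ̄₂ + η₁ η̄₂)`. -/
def qinner (κ₁ κ₂ : ℍ[ℝ] × ℍ[ℝ]) : ℝ := (κ₁.1 * star κ₂.1 + κ₁.2 * star κ₂.2).re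

/-- The squared norm `|κ|² = |ξ|² + |η|²` on `ℍ²`. -/
def qnsq (κ : ℍ[ℝ] × ℍ[ℝ]) : ℝ := Quaternion.normSq κ.1 + Quaternion.normSq κ.2

/-- The pseudo-determinant of a 2×2 quaternionic matrix: `pdet [[a,b],[c,d]] = a* d − c* b`. -/
def pdet (A : Matrix (Fin 2) (Fin 2) ℍ[ℝ]) : ℍ[ℝ] := qstar (A 0 0) * A 1 1 - qstar (A 1 0) * A 0 1

/-- A Clifford matrix: columns are quaternionic spinors and the pseudo-determinant is 1. -/
def IsClifford (A : Matrix (Fin 2) (Fin 2) ℍ[ℝ]) : Prop :=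
  IsSpinor (A 0 0, A 1 0) ∧ IsSpinor (A 0 1, A 1 1) ∧ pdet A = 1

/-- Matrix-vector action of a 2×2 quaternionic matrix on a column vector in `ℍ²`. -/
def mact (A : Matrix (Fin 2) (Fin 2) ℍ[ℝ]) (κ : ℍ[ℝ] × ℍ[ℝ]) : ℍ[ℝ] × ℍ[ℝ] :=
  (A 0 0 * κ.1 + A 0 1 * κ.2, A 1 0 * κ.1 + A 1 1 * κ.2)

/-- A parabolic translation: a Clifford matrix `A ≠ 1` with `(A − 1)² = 0`. -/
def IsParabolic (A : Matrix (Fin 2) (Fin 2) ℍ[ℝ]) : Prop := A ≠ 1 ∧ (A - 1) ^ 2 = 0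

/-! ### Auxiliary lemmas -/

lemma qstar_re (q : ℍ[ℝ]) : (qstar q).re = q.re := rfl
lemma qstar_imI (q : ℍ[ℝ]) : (qstar q).imI = q.imI := rfl
lemma qstar_imJ (q : ℍ[ℝ]) : (qstar q).imJ = q.imJ := rfl
lemma qstar_imK (q : ℍ[ℝ]) : (qstar q).imK = -q.imK := rfl

lemma qstar_mul (p q : ℍ[ℝ]) : qstar (p*q) = qstar q * qstar p := by
  ext <;> simp [qstar_re, qstar_imI, qstar_imJ, qstar_imK] <;> ring

lemma qstar_sub (p q : ℍ[ℝ]) : qstar (p - q) = qstar p - qstar q := by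
  ext <;> simp [qstar_re, qstar_imI, qstar_imJ, qstar_imK] <;> ring

lemma qstar_one : qstar 1 = 1 := by ext <;> simp [qstar]

lemma qstar_zero : qstar 0 = 0 := by ext <;> simp [qstar]

lemma qstar_qstar (q : ℍ[ℝ]) : qstar (qstar q) = q := by ext <;> simp [qstar]

lemma qstar_coe (r : ℝ) : qstar (r : ℍ[ℝ]) = (r : ℍ[ℝ]) := by ext <;> simp [qstar]

lemma paravector_qstar {q : ℍ[ℝ]} (h : IsParavector q) : qstar q = q := by
  have h' : q.imK = 0 := h
  ext <;> simp [qstar, h']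

lemma qstar_paravector {q : ℍ[ℝ]} (h : qstar q = q) : IsParavector q := by
  have := congrArg QuaternionAlgebra.imK h
  simp [qstar] at this
  simp only [IsParavector]; linarith

lemma coe_ne_zero' {r : ℝ} (h : r ≠ 0) : (r : ℍ[ℝ]) ≠ 0 :=
  fun hc => h (Quaternion.coe_injective (by simpa using hc))

lemma lemR1 (a c : ℍ[ℝ]) (hu : IsParavector (a * star c)) : qstar a * c = qstar c * a := by
  rcases eq_or_ne c 0 with rfl | hc
  · simp [qstar_zero]
  have hq : qstar (a * star c) = a * star c := paravector_qstar hu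
  have hn0 : ((normSq c : ℝ) : ℍ[ℝ]) ≠ 0 := coe_ne_zero' (normSq_ne_zero.mpr hc)
  have f1 : (a * star c) * c = a * ((normSq c : ℝ) : ℍ[ℝ]) := by
    rw [mul_assoc, star_mul_self]
  have f2 : qstar c * (a * star c) = ((normSq c : ℝ) : ℍ[ℝ]) * qstar a := by
    have t := congrArg qstar f1
    rwa [qstar_mul, hq, qstar_mul, qstar_coe] at t
  apply mul_left_cancel₀ hn0
  calc ((normSq c : ℝ) : ℍ[ℝ]) * (qstar a * c)
      = (((normSq c : ℝ) : ℍ[ℝ]) * qstar a) * c := by rw [mul_assoc]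
    _ = (qstar c * (a * star c)) * c := by rw [f2]
    _ = qstar c * ((a * star c) * c) := by rw [mul_assoc]
    _ = qstar c * (a * ((normSq c : ℝ) : ℍ[ℝ])) := by rw [f1]
    _ = (qstar c * a) * ((normSq c : ℝ) : ℍ[ℝ]) := by rw [mul_assoc]
    _ = ((normSq c : ℝ) : ℍ[ℝ]) * (qstar c * a) := (Quaternion.coe_commutes _ _).symm

lemma lemC (a b c d : ℍ[ℝ]) (hc : c ≠ 0) (hu : IsParavector (a * star c))
    (h10 : c * (a - 1) + (d - 1) * c = 0)
    (h00 : (a - 1) * (a - 1) + b * c = 0)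
    (hp : qstar a * d - qstar c * b = 1) : qstar c = c := by
  have hq : qstar (a * star c) = a * star c := paravector_qstar hu
  set u : ℍ[ℝ] := a * star c with hu'
  set N : ℍ[ℝ] := ((normSq c : ℝ) : ℍ[ℝ]) with hN
  have hn0 : N ≠ 0 := coe_ne_zero' (normSq_ne_zero.mpr hc)
  have f1 : u * c = a * N := by rw [hu', mul_assoc, star_mul_self]
  have f2 : qstar c * u = N * qstar a := by
    have t := congrArg qstar f1
    rwa [qstar_mul, hq, qstar_mul, hN, qstar_coe] at t
  have hD1 : qstar a * d - qstar c * b - 1 = 0 := sub_eq_zero.mpr hp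
  have hD2 : d * c - (2*c - c*a) = 0 := by
    have t : d * c - (2*c - c*a) = c * (a - 1) + (d - 1) * c := by noncomm_ring
    rw [t, h10]
  have hD3 : b * c - (2*a - a*a - 1) = 0 := by
    have t : b * c - (2*a - a*a - 1) = (a - 1) * (a - 1) + b * c := by noncomm_ring
    rw [t, h00]
  have hD4 : u * c - a * N = 0 := sub_eq_zero.mpr f1
  have hD5 : qstar c * u - N * qstar a = 0 := sub_eq_zero.mpr f2
  have hD8 : N * qstar c - qstar c * N = 0 := sub_eq_zero.mpr (Quaternion.coe_commutes _ _)
  have hD9 : N * a - a * N = 0 := sub_eq_zero.mpr (Quaternion.coe_commutes _ _)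
  have comb : N * (N * qstar c) - N * (N * c) =
      - (N * (N * (qstar a * (d * c - (2*c - c*a)))))
      + N * (N * (qstar c * (b * c - (2*a - a*a - 1))))
      + N * (N * ((qstar a * d - qstar c * b - 1) * c))
      + 2 * ( - (N * (qstar c * (u * c - a * N)))
              + N * ((N * qstar c - qstar c * N) * a)
              + N * ((qstar c * u - N * qstar a) * c) )
      - N * ((qstar c * u - N * qstar a) * (c * a))
      + N * (qstar c * ((u * c - a * N) * a))
      - N * ((N * qstar c - qstar c * N) * (a * a))
      + 2 * (N * (qstar c * (N * a - a * N)))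
      - N * (qstar c * ((N * a - a * N) * a)) := by noncomm_ring
  rw [hD1, hD2, hD3, hD4, hD5, hD8, hD9] at comb
  simp only [mul_zero, zero_mul, sub_zero, add_zero, zero_add, neg_zero, mul_zero] at comb
  exact mul_left_cancel₀ hn0 (mul_left_cancel₀ hn0 (sub_eq_zero.mp comb))

lemma entries_of_sq_zero (A : Matrix (Fin 2) (Fin 2) ℍ[ℝ]) (h : (A - 1)^2 = 0) :
    ((A 0 0 - 1) * (A 0 0 - 1) + A 0 1 * A 1 0 = 0) ∧
    ((A 0 0 - 1) * A 0 1 + A 0 1 * (A 1 1 - 1) = 0) ∧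
    (A 1 0 * (A 0 0 - 1) + (A 1 1 - 1) * A 1 0 = 0) ∧
    (A 1 0 * A 0 1 + (A 1 1 - 1) * (A 1 1 - 1) = 0) := by
  rw [pow_two] at h
  have t00 : ((A - 1) * (A - 1)) 0 0 = 0 := by rw [h]; simp
  have t01 : ((A - 1) * (A - 1)) 0 1 = 0 := by rw [h]; simp
  have t10 : ((A - 1) * (A - 1)) 1 0 = 0 := by rw [h]; simp
  have t11 : ((A - 1) * (A - 1)) 1 1 = 0 := by rw [h]; simp
  simp only [Matrix.mul_apply, Fin.sum_univ_two, Matrix.sub_apply, Matrix.one_apply_eq,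
    Matrix.one_apply_ne (show (0:Fin 2) ≠ 1 by decide),
    Matrix.one_apply_ne (show (1:Fin 2) ≠ 0 by decide), sub_zero] at t00 t01 t10 t11
  exact ⟨t00, t01, t10, t11⟩

set_option maxHeartbeats 1000000 in
/-- For a Clifford matrix `A`:
(i) if `A` is a parabolic translation and `Aκ = κx` for some spinor `κ` and `x ∈ ℍ`,
then `x = 1`;
(ii) `A` is a parabolic translation iff `A ≠ 1` and `Aκ = κ` for some spinor `κ`. -/
theorem parabolic_on_spinors (A : Matrix (Fin 2) (Fin 2) ℍ[ℝ]) (hA : IsClifford A) :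
    (∀ (κ : ℍ[ℝ] × ℍ[ℝ]) (x : ℍ[ℝ]), IsParabolic A → IsSpinor κ →
      mact A κ = rmul κ x → x = 1) ∧
    (IsParabolic A ↔ (A ≠ 1 ∧ ∃ κ : ℍ[ℝ] × ℍ[ℝ], IsSpinor κ ∧ mact A κ = κ)) := by
  obtain ⟨hs1, hs2, hpdet⟩ := hA
  have hp : qstar (A 0 0) * A 1 1 - qstar (A 1 0) * A 0 1 = 1 := hpdet
  have hu1 : IsParavector (A 0 0 * star (A 1 0)) := hs1.2
  have hu2 : IsParavector (A 0 1 * star (A 1 1)) := hs2.2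
  constructor
  · -- part (i)
    rintro ⟨ξ, η⟩ x ⟨-, hN2⟩ ⟨hk0, -⟩ hfix
    obtain ⟨e00, e01, e10, e11⟩ := entries_of_sq_zero A hN2
    have e1 : A 0 0 * ξ + A 0 1 * η = ξ * x := congrArg Prod.fst hfix
    have e2 : A 1 0 * ξ + A 1 1 * η = η * x := congrArg Prod.snd hfix
    have s1 : ξ * x - ξ = (A 0 0 - 1) * ξ + A 0 1 * η := by
      have t : ξ * x - ξ - ((A 0 0 - 1) * ξ + A 0 1 * η)
          = ξ * x - (A 0 0 * ξ + A 0 1 * η) := by noncomm_ring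
      rw [e1, sub_self] at t
      exact sub_eq_zero.mp t
    have s2 : η * x - η = A 1 0 * ξ + (A 1 1 - 1) * η := by
      have t : η * x - η - (A 1 0 * ξ + (A 1 1 - 1) * η)
          = η * x - (A 1 0 * ξ + A 1 1 * η) := by noncomm_ring
      rw [e2, sub_self] at t
      exact sub_eq_zero.mp t
    have hxone : ∀ w : ℍ[ℝ], w ≠ 0 → w * ((x - 1) * (x - 1)) = 0 → x = 1 := by
      intro w hw h
      have h2 := (mul_eq_zero.mp h).resolve_left hw
      exact sub_eq_zero.mp (mul_self_eq_zero.mp h2)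
    rcases eq_or_ne ξ 0 with hξ | hξ
    · have hη : η ≠ 0 := by
        intro h; exact hk0 (by rw [hξ, h]; rfl)
      refine hxone η hη ?_
      calc η * ((x - 1) * (x - 1)) = (η * x - η) * (x - 1) := by noncomm_ring
        _ = (A 1 0 * ξ + (A 1 1 - 1) * η) * (x - 1) := by rw [s2]
        _ = A 1 0 * (ξ * x - ξ) + (A 1 1 - 1) * (η * x - η) := by noncomm_ring
        _ = A 1 0 * ((A 0 0 - 1) * ξ + A 0 1 * η)
            + (A 1 1 - 1) * (A 1 0 * ξ + (A 1 1 - 1) * η) := by rw [s1, s2]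
        _ = (A 1 0 * (A 0 0 - 1) + (A 1 1 - 1) * A 1 0) * ξ
            + (A 1 0 * A 0 1 + (A 1 1 - 1) * (A 1 1 - 1)) * η := by noncomm_ring
        _ = 0 := by rw [e10, e11]; simp
    · refine hxone ξ hξ ?_
      calc ξ * ((x - 1) * (x - 1)) = (ξ * x - ξ) * (x - 1) := by noncomm_ring
        _ = ((A 0 0 - 1) * ξ + A 0 1 * η) * (x - 1) := by rw [s1]
        _ = (A 0 0 - 1) * (ξ * x - ξ) + A 0 1 * (η * x - η) := by noncomm_ring
        _ = (A 0 0 - 1) * ((A 0 0 - 1) * ξ + A 0 1 * η)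
            + A 0 1 * (A 1 0 * ξ + (A 1 1 - 1) * η) := by rw [s1, s2]
        _ = ((A 0 0 - 1) * (A 0 0 - 1) + A 0 1 * A 1 0) * ξ
            + ((A 0 0 - 1) * A 0 1 + A 0 1 * (A 1 1 - 1)) * η := by noncomm_ring
        _ = 0 := by rw [e00, e01]; simp
  · constructor
    · -- parabolic → fixed spinor
      rintro ⟨hA1, hN2⟩
      obtain ⟨e00, e01, e10, e11⟩ := entries_of_sq_zero A hN2
      refine ⟨hA1, ?_⟩
      rcases eq_or_ne (A 1 0) 0 with hc0 | hc
      · rcases eq_or_ne (A 0 1) 0 with hb0 | hb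
        · -- both off-diagonal zero : A = 1, contradiction
          exfalso
          apply hA1
          have ha : A 0 0 = 1 := by
            rw [hb0, zero_mul, add_zero] at e00
            exact sub_eq_zero.mp (mul_self_eq_zero.mp e00)
          have hd : A 1 1 = 1 := by
            rw [hc0, zero_mul, zero_add] at e11
            exact sub_eq_zero.mp (mul_self_eq_zero.mp e11)
          refine Matrix.ext fun i j => ?_
          fin_cases i <;> fin_cases j <;> simp [Matrix.one_apply, ha, hd, hb0, hc0]
        · -- A 0 1 ≠ 0
          have hp' : qstar (A 1 1) * A 0 0 - qstar (A 0 1) * A 1 0 = 1 := by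
            have t := congrArg qstar hp
            rwa [qstar_sub, qstar_mul, qstar_mul, qstar_qstar, qstar_qstar, qstar_one] at t
          have hu2' : IsParavector (A 1 1 * star (A 0 1)) := by
            have t : A 1 1 * star (A 0 1) = star (A 0 1 * star (A 1 1)) := by
              rw [star_mul, star_star]
            show (A 1 1 * star (A 0 1)).imK = 0
            have h2 : (A 0 1 * star (A 1 1)).imK = 0 := hu2
            rw [t]; simp only [Quaternion.imK_star, h2, neg_zero]
          have e01' : A 0 1 * (A 1 1 - 1) + (A 0 0 - 1) * A 0 1 = 0 := by
            rw [add_comm]; exact e01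
          have e11' : (A 1 1 - 1) * (A 1 1 - 1) + A 1 0 * A 0 1 = 0 := by
            rw [add_comm]; exact e11
          have hbV : qstar (A 0 1) = A 0 1 :=
            lemC (A 1 1) (A 1 0) (A 0 1) (A 0 0) hb hu2' e01' e11' hp'
          have hbK : (A 0 1).imK = 0 := qstar_paravector hbV
          refine ⟨(A 0 1, A 1 1 - 1), ⟨?_, ?_⟩, ?_⟩
          · intro h; exact hb (congrArg Prod.fst h)
          · show (A 0 1 * star (A 1 1 - 1)).imK = 0
            have t : A 0 1 * star (A 1 1 - 1) = A 0 1 * star (A 1 1) - A 0 1 := by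
              rw [star_sub, star_one, mul_sub, mul_one]
            have h2 : (A 0 1 * star (A 1 1)).imK = 0 := hu2
            rw [t]; simp only [Quaternion.imK_sub, h2, hbK, sub_zero, zero_sub, neg_zero]
          · have g1 : A 0 0 * A 0 1 + A 0 1 * (A 1 1 - 1) = A 0 1 := by
              have t : A 0 0 * A 0 1 + A 0 1 * (A 1 1 - 1) - A 0 1
                  = (A 0 0 - 1) * A 0 1 + A 0 1 * (A 1 1 - 1) := by noncomm_ring
              exact sub_eq_zero.mp (t.trans e01)
            have g2 : A 1 0 * A 0 1 + A 1 1 * (A 1 1 - 1) = A 1 1 - 1 := by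
              have t : A 1 0 * A 0 1 + A 1 1 * (A 1 1 - 1) - (A 1 1 - 1)
                  = A 1 0 * A 0 1 + (A 1 1 - 1) * (A 1 1 - 1) := by noncomm_ring
              exact sub_eq_zero.mp (t.trans e11)
            show (A 0 0 * A 0 1 + A 0 1 * (A 1 1 - 1), A 1 0 * A 0 1 + A 1 1 * (A 1 1 - 1))
                = (A 0 1, A 1 1 - 1)
            rw [g1, g2]
      · -- A 1 0 ≠ 0
        have hcV : qstar (A 1 0) = A 1 0 :=
          lemC (A 0 0) (A 0 1) (A 1 0) (A 1 1) hc hu1 e10 e00 hp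
        have hcK : (A 1 0).imK = 0 := qstar_paravector hcV
        refine ⟨(A 0 0 - 1, A 1 0), ⟨?_, ?_⟩, ?_⟩
        · intro h; exact hc (congrArg Prod.snd h)
        · show ((A 0 0 - 1) * star (A 1 0)).imK = 0
          have t : (A 0 0 - 1) * star (A 1 0) = A 0 0 * star (A 1 0) - star (A 1 0) := by
            rw [sub_mul, one_mul]
          have h1 : (A 0 0 * star (A 1 0)).imK = 0 := hu1
          rw [t]; simp only [Quaternion.imK_sub, Quaternion.imK_star, h1, hcK, neg_zero, sub_zero, zero_sub]
        · have g1 : A 0 0 * (A 0 0 - 1) + A 0 1 * A 1 0 = A 0 0 - 1 := by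
            have t : A 0 0 * (A 0 0 - 1) + A 0 1 * A 1 0 - (A 0 0 - 1)
                = (A 0 0 - 1) * (A 0 0 - 1) + A 0 1 * A 1 0 := by noncomm_ring
            exact sub_eq_zero.mp (t.trans e00)
          have g2 : A 1 0 * (A 0 0 - 1) + A 1 1 * A 1 0 = A 1 0 := by
            have t : A 1 0 * (A 0 0 - 1) + A 1 1 * A 1 0 - A 1 0
                = A 1 0 * (A 0 0 - 1) + (A 1 1 - 1) * A 1 0 := by noncomm_ring
            exact sub_eq_zero.mp (t.trans e10)
          show (A 0 0 * (A 0 0 - 1) + A 0 1 * A 1 0, A 1 0 * (A 0 0 - 1) + A 1 1 * A 1 0)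
              = (A 0 0 - 1, A 1 0)
          rw [g1, g2]
    · -- fixed spinor → parabolic
      rintro ⟨hA1, ⟨ξ, η⟩, ⟨hk0, hkp⟩, hfix⟩
      refine ⟨hA1, ?_⟩
      have e1 : A 0 0 * ξ + A 0 1 * η = ξ := congrArg Prod.fst hfix
      have e2 : A 1 0 * ξ + A 1 1 * η = η := congrArg Prod.snd hfix
      rcases eq_or_ne η 0 with hη | hη
      · have hξ : ξ ≠ 0 := by
          intro h; exact hk0 (by rw [hη, h]; rfl)
        rw [hη, mul_zero, add_zero] at e1 e2
        have ha : A 0 0 = 1 := by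
          have t : A 0 0 * ξ = 1 * ξ := by rw [one_mul]; exact e1
          exact mul_right_cancel₀ hξ t
        have hc0 : A 1 0 = 0 := (mul_eq_zero.mp e2).resolve_right hξ
        have hd : A 1 1 = 1 := by
          have t := hp
          rwa [ha, hc0, qstar_one, qstar_zero, one_mul, zero_mul, sub_zero] at t
        rw [pow_two]
        refine Matrix.ext fun i j => ?_
        fin_cases i <;> fin_cases j <;>
          simp [Matrix.mul_apply, Fin.sum_univ_two, Matrix.sub_apply, Matrix.one_apply,
            ha, hc0, hd]
      · -- η ≠ 0
        set v : ℍ[ℝ] := (normSq η)⁻¹ • (ξ * star η) with hv'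
        have hvK : v.imK = 0 := by
          have h1 : (ξ * star η).imK = 0 := hkp
          rw [hv']; simp [h1]
        have hv : qstar v = v := paravector_qstar hvK
        have hξv : v * η = ξ := by
          rw [hv', smul_mul_assoc, mul_assoc, star_mul_self, Quaternion.mul_coe_eq_smul,
            smul_smul, inv_mul_cancel₀ (normSq_ne_zero.mpr hη), one_smul]
        have fb : (A 0 0 * v + A 0 1 - v) * η = 0 := by
          have t : (A 0 0 * v + A 0 1 - v) * η
              = (A 0 0 * (v * η) + A 0 1 * η) - v * η := by noncomm_ring
          rw [hξv, e1, sub_self] at t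
          exact t
        have hb : A 0 1 = v - A 0 0 * v := by
          have h0 := (mul_eq_zero.mp fb).resolve_right hη
          have t : A 0 1 - (v - A 0 0 * v) = A 0 0 * v + A 0 1 - v := by noncomm_ring
          exact sub_eq_zero.mp (t.trans h0)
        have fd : (A 1 0 * v + A 1 1 - 1) * η = 0 := by
          have t : (A 1 0 * v + A 1 1 - 1) * η
              = (A 1 0 * (v * η) + A 1 1 * η) - η := by noncomm_ring
          rw [hξv, e2, sub_self] at t
          exact t
        have hd : A 1 1 = 1 - A 1 0 * v := by
          have h0 := (mul_eq_zero.mp fd).resolve_right hη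
          have t : A 1 1 - (1 - A 1 0 * v) = A 1 0 * v + A 1 1 - 1 := by noncomm_ring
          exact sub_eq_zero.mp (t.trans h0)
        have R1 : qstar (A 0 0) * A 1 0 = qstar (A 1 0) * A 0 0 := lemR1 _ _ hu1
        have hp2 : qstar (A 0 0) * (1 - A 1 0 * v) - qstar (A 1 0) * (v - A 0 0 * v) = 1 := by
          rw [← hd, ← hb]; exact hp
        have key : qstar (A 0 0) - qstar (A 1 0) * v = 1 := by
          have t : qstar (A 0 0) - qstar (A 1 0) * v - 1 =
              (qstar (A 0 0) * (1 - A 1 0 * v) - qstar (A 1 0) * (v - A 0 0 * v) - 1)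
              + ((qstar (A 0 0) * A 1 0) * v - (qstar (A 1 0) * A 0 0) * v) := by noncomm_ring
          rw [hp2, R1] at t
          simp only [sub_self, add_zero, zero_add] at t
          exact sub_eq_zero.mp t
        have ha : A 0 0 = 1 + v * A 1 0 := by
          have t2 := congrArg qstar key
          rw [qstar_sub, qstar_mul, qstar_qstar, qstar_qstar, qstar_one, hv] at t2
          exact eq_add_of_sub_eq t2
        have g00 : (A 0 0 - 1) * (A 0 0 - 1) + A 0 1 * A 1 0 = 0 := by
          simp only [hb, hd, ha]; noncomm_ring
        have g01 : (A 0 0 - 1) * A 0 1 + A 0 1 * (A 1 1 - 1) = 0 := by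
          simp only [hb, hd, ha]; noncomm_ring
        have g10 : A 1 0 * (A 0 0 - 1) + (A 1 1 - 1) * A 1 0 = 0 := by
          simp only [hb, hd, ha]; noncomm_ring
        have g11 : A 1 0 * A 0 1 + (A 1 1 - 1) * (A 1 1 - 1) = 0 := by
          simp only [hb, hd, ha]; noncomm_ring
        rw [pow_two]
        refine Matrix.ext fun i j => ?_
        fin_cases i <;> fin_cases j <;>
          simp only [Fin.zero_eta, Fin.mk_one, Fin.isValue, Matrix.mul_apply,
            Fin.sum_univ_two, Matrix.sub_apply, Matrix.one_apply_eq,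
            Matrix.one_apply_ne (show (0:Fin 2) ≠ 1 by decide),
            Matrix.one_apply_ne (show (1:Fin 2) ≠ 0 by decide), sub_zero, Matrix.zero_apply]
        · exact g00
        · exact g01
        · exact g10
        · exact g11
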